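/- arXiv:1011.4748 — 3 statements merged into one kernel-verified Lean document; each statement's English description precedes it below -/
import Mathlib

section
/- Let (Ω, F, P) be a probability space and let X_1, …, X_n be real-valued random variables on Ω with values in [0,1] such that for every 1 ≤ t ≤ n the conditional expectation of X_t given the σ-algebra generated by X_1, …, X_{t−1} equals μ almost surely. Let S_n = X_1 + … + X_n. Then for every a ≥ 0, P(S_n ≥ n·μ + a) ≤ exp(−2a²/n). -/
open MeasureTheory

lemma hoeff_q_pos (p : ℝ) (hp0 : 0 ≤ p) (hp1 : p ≤ 1) (t : ℝ) :
    0 < 1 - p + p * Real.exp t := by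
  rcases eq_or_lt_of_le hp1 with h | h
  · subst h; simpa using Real.exp_pos t
  · have := Real.exp_pos t; nlinarith

lemma hoeff_key (p : ℝ) (hp0 : 0 ≤ p) (hp1 : p ≤ 1) (t : ℝ) (ht : 0 ≤ t) :
    1 - p + p * Real.exp t ≤ Real.exp (p * t + t ^ 2 / 8) := by
  set q : ℝ → ℝ := fun t => 1 - p + p * Real.exp t with hq
  have hqpos : ∀ x, 0 < q x := hoeff_q_pos p hp0 hp1
  set f : ℝ → ℝ := fun t => p * t + t ^ 2 / 8 - Real.log (q t) with hf
  set g : ℝ → ℝ := fun t => p + t / 4 - p * Real.exp t / q t with hg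
  have hqd : ∀ x, HasDerivAt q (p * Real.exp x) x := fun x => by
    exact ((Real.hasDerivAt_exp x).const_mul p).const_add (1 - p)
  have hfd : ∀ x, HasDerivAt f (g x) x := by
    intro x
    have h1 : HasDerivAt (fun t : ℝ => p * t + t ^ 2 / 8) (p + 2 * x / 8) x := by
      refine HasDerivAt.congr_deriv (((hasDerivAt_id x).const_mul p).add ((hasDerivAt_pow 2 x).div_const 8)) ?_
      norm_num
    have h2 : HasDerivAt (fun t => Real.log (q t)) (p * Real.exp x / q x) x :=
      (hqd x).log (hqpos x).ne'
    have := h1.sub h2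
    refine this.congr_deriv ?_
    simp only [hg]; ring
  have hgd : ∀ x, HasDerivAt g (1 / 4 - p * Real.exp x * (1 - p) / (q x) ^ 2) x := by
    intro x
    have h1 : HasDerivAt (fun t : ℝ => p + t / 4) (1 / 4) x := by
      simpa using ((hasDerivAt_id x).div_const 4).const_add p
    have h2 : HasDerivAt (fun t => p * Real.exp t / q t)
        ((p * Real.exp x * q x - p * Real.exp x * (p * Real.exp x)) / (q x) ^ 2) x :=
      ((Real.hasDerivAt_exp x).const_mul p).div (hqd x) (hqpos x).ne'
    have := h1.sub h2
    refine this.congr_deriv ?_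
    have hqx : q x - p * Real.exp x = 1 - p := by simp only [hq]; ring
    congr 1
    rw [← hqx]; ring
  have hg'nonneg : ∀ x, 0 ≤ 1 / 4 - p * Real.exp x * (1 - p) / (q x) ^ 2 := by
    intro x
    have hq2 : (0:ℝ) < (q x) ^ 2 := pow_pos (hqpos x) 2
    rw [sub_nonneg, div_le_iff₀ hq2]
    have : q x = 1 - p + p * Real.exp x := rfl
    nlinarith [sq_nonneg ((1 - p) - p * Real.exp x)]
  have hgmono : Monotone g := by
    apply monotone_of_deriv_nonneg (fun x => (hgd x).differentiableAt)
    intro x; rw [(hgd x).deriv]; exact hg'nonneg x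
  have hg0 : g 0 = 0 := by simp [hg, hq]
  have hgnn : ∀ x, 0 ≤ x → 0 ≤ g x := fun x hx => hg0 ▸ hgmono hx
  have hfmono : MonotoneOn f (Set.Ici 0) := by
    apply monotoneOn_of_deriv_nonneg (convex_Ici 0)
      (fun x _ => (hfd x).differentiableAt.continuousAt.continuousWithinAt)
      (fun x _ => (hfd x).differentiableAt.differentiableWithinAt)
    intro x hx
    rw [(hfd x).deriv]
    exact hgnn x (le_of_lt (by simpa using hx))
  have hf0 : f 0 = 0 := by simp [hf, hq]
  have hft : 0 ≤ f t := hf0 ▸ hfmono (Set.self_mem_Ici) ht ht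
  have : Real.log (q t) ≤ p * t + t ^ 2 / 8 := by
    simp only [hf] at hft; linarith
  calc q t ≤ Real.exp (Real.log (q t)) := by rw [Real.exp_log (hqpos t)]
    _ ≤ _ := Real.exp_le_exp.2 this

/-- Upper-tail Chernoff–Hoeffding bound for random variables with range `[0,1]`
whose conditional mean given the past is `mu`. -/
theorem chernoff_hoeffding_upper
    {Ω : Type*} [MeasurableSpace Ω] (P : Measure Ω) [IsProbabilityMeasure P]
    (n : ℕ) (X : Fin n → Ω → ℝ) (mu : ℝ)
    (hmeas : ∀ t, Measurable (X t))
    (hrange : ∀ t ω, X t ω ∈ Set.Icc (0 : ℝ) 1)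
    (hcond : ∀ t : Fin n,
      P[X t | ⨆ (s : Fin n) (_ : s < t), MeasurableSpace.comap (X s) inferInstance]
        =ᵐ[P] fun _ => mu)
    (a : ℝ) (ha : 0 ≤ a) :
    P {ω | (n : ℝ) * mu + a ≤ ∑ t, X t ω}
      ≤ ENNReal.ofReal (Real.exp (-2 * a ^ 2 / n)) := by
  rcases Nat.eq_zero_or_pos n with hn | hn
  · subst hn
    have : Real.exp (-2 * a ^ 2 / (0:ℕ)) = 1 := by norm_num
    rw [this]
    simpa using prob_le_one
  -- notation
  set mF : Fin n → MeasurableSpace Ω := fun t =>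
    ⨆ (s : Fin n) (_ : s < t), MeasurableSpace.comap (X s) inferInstance with hmF
  have hmle : ∀ t, mF t ≤ ‹MeasurableSpace Ω› := by
    intro t
    exact iSup₂_le fun s _ => measurable_iff_comap_le.1 (hmeas s)
  have hintX : ∀ t, Integrable (X t) P := by
    intro t
    refine ⟨(hmeas t).aestronglyMeasurable, HasFiniteIntegral.of_bounded (C := 1) ?_⟩
    filter_upwards with ω
    rw [Real.norm_eq_abs, abs_le]
    exact ⟨by linarith [(hrange t ω).1], (hrange t ω).2⟩
  -- mu ∈ [0,1]
  have hmu : 0 ≤ mu ∧ mu ≤ 1 := by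
    set t0 : Fin n := ⟨0, hn⟩
    have h1 : ∫ ω, (P[X t0 | mF t0]) ω ∂P = ∫ ω, X t0 ω ∂P := integral_condExp (hmle t0)
    have h2 : ∫ ω, (P[X t0 | mF t0]) ω ∂P = mu := by
      rw [integral_congr_ae (hcond t0)]
      simp
    constructor
    · rw [← h2, h1]; exact integral_nonneg fun ω => (hrange t0 ω).1
    · rw [← h2, h1]
      calc ∫ ω, X t0 ω ∂P ≤ ∫ _, (1:ℝ) ∂P :=
            integral_mono (hintX t0) (integrable_const 1) fun ω => (hrange t0 ω).2
        _ = 1 := by simp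
  set lam : ℝ := 4 * a / n with hlamdef
  have hlam : 0 ≤ lam := by positivity
  set c : ℝ := Real.exp lam - 1 with hcdef
  have hc : 0 ≤ c := by
    have := Real.one_le_exp hlam; simp only [hcdef]; linarith
  set B : ℝ := 1 + c * mu with hBdef
  have hB0 : 0 ≤ B := by nlinarith [hmu.1]
  -- pointwise convexity bound
  have hconvex : ∀ x : ℝ, 0 ≤ x → x ≤ 1 → Real.exp (lam * x) ≤ 1 + c * x := by
    intro x hx0 hx1
    have h := convexOn_exp.2 (Set.mem_univ (0:ℝ)) (Set.mem_univ lam)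
      (by linarith : (0:ℝ) ≤ 1 - x) hx0 (by ring)
    simp only [smul_eq_mul, mul_zero, zero_add, Real.exp_zero, mul_one] at h
    have hxl : x * lam = lam * x := mul_comm _ _
    rw [hxl] at h
    simp only [hcdef]
    nlinarith
  -- integrability of exp(lam * X t)
  have hintZ : ∀ t : Fin n, Integrable (fun ω => Real.exp (lam * X t ω)) P := by
    intro t
    refine ⟨(Real.measurable_exp.comp ((hmeas t).const_mul lam)).aestronglyMeasurable,
      HasFiniteIntegral.of_bounded (C := Real.exp lam) ?_⟩
    filter_upwards with ω
    rw [Real.norm_eq_abs, abs_of_pos (Real.exp_pos _)]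
    exact Real.exp_le_exp.2 (by nlinarith [(hrange t ω).1, (hrange t ω).2])
  -- conditional expectation bound
  have hcb : ∀ t : Fin n,
      P[fun ω => Real.exp (lam * X t ω) | mF t] ≤ᵐ[P] fun _ => B := by
    intro t
    have haff : Integrable (fun ω => 1 + c * X t ω) P :=
      (integrable_const 1).add ((hintX t).const_mul c)
    have h1 : P[fun ω => Real.exp (lam * X t ω) | mF t] ≤ᵐ[P]
        P[fun ω => 1 + c * X t ω | mF t] :=
      condExp_mono (hintZ t) haff
        (ae_of_all _ fun ω => hconvex _ (hrange t ω).1 (hrange t ω).2)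
    have h2 : P[fun ω => 1 + c * X t ω | mF t] =ᵐ[P] fun _ => B := by
      have e1 : (fun ω => 1 + c * X t ω) = (fun _ : Ω => (1:ℝ)) + c • X t := by
        funext ω; simp
      rw [e1]
      have hadd := condExp_add (μ := P) (m := mF t) (integrable_const (1:ℝ))
        ((hintX t).smul c)
      have hsm := condExp_smul (μ := P) (m := mF t) c (X t)
      filter_upwards [hadd, hsm, hcond t] with ω h₁ h₂ h₃
      have hc1 : P[(fun _ : Ω => (1:ℝ)) | mF t] = fun _ => (1:ℝ) :=
        condExp_const (hmle t) 1
      simp only [Pi.add_apply, Pi.smul_apply, smul_eq_mul] at h₁ h₂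
      rw [h₁, hc1, h₂, h₃]
    exact h1.trans h2.le
  -- partial sums
  set Sk : ℕ → Ω → ℝ := fun k ω =>
    ∑ s ∈ Finset.univ.filter (fun s : Fin n => (s : ℕ) < k), X s ω with hSkdef
  have hSk_nonneg : ∀ k ω, 0 ≤ Sk k ω := fun k ω =>
    Finset.sum_nonneg fun s _ => (hrange s ω).1
  have hSk_le : ∀ k ω, Sk k ω ≤ n := by
    intro k ω
    calc Sk k ω ≤ ∑ _s ∈ Finset.univ.filter (fun s : Fin n => (s : ℕ) < k), (1:ℝ) :=
          Finset.sum_le_sum fun s _ => (hrange s ω).2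
      _ = (Finset.univ.filter (fun s : Fin n => (s : ℕ) < k)).card := by simp
      _ ≤ ((Finset.univ : Finset (Fin n)).card : ℝ) := by
          exact_mod_cast Finset.card_filter_le _ _
      _ = n := by simp
  have hSkmeas : ∀ k, Measurable (Sk k) :=
    fun k => Finset.measurable_sum _ fun s _ => hmeas s
  have hintY : ∀ k, Integrable (fun ω => Real.exp (lam * Sk k ω)) P := by
    intro k
    refine ⟨(Real.measurable_exp.comp ((hSkmeas k).const_mul lam)).aestronglyMeasurable,
      HasFiniteIntegral.of_bounded (C := Real.exp (lam * n)) ?_⟩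
    filter_upwards with ω
    rw [Real.norm_eq_abs, abs_of_pos (Real.exp_pos _)]
    exact Real.exp_le_exp.2 (mul_le_mul_of_nonneg_left (hSk_le k ω) hlam)
  -- the key induction
  have hkey : ∀ k, k ≤ n → ∫ ω, Real.exp (lam * Sk k ω) ∂P ≤ B ^ k := by
    intro k
    induction k with
    | zero =>
      intro _
      have : ∀ ω, Sk 0 ω = 0 := by intro ω; simp [hSkdef]
      simp [this]
    | succ k ih =>
      intro hk1
      have hk : k < n := hk1
      set t : Fin n := ⟨k, hk⟩ with htdef
      have hfilter : Finset.univ.filter (fun s : Fin n => (s:ℕ) < k+1)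
          = insert t (Finset.univ.filter (fun s : Fin n => (s:ℕ) < k)) := by
        ext s
        simp only [Finset.mem_filter, Finset.mem_insert, Finset.mem_univ, true_and]
        constructor
        · intro hs
          rcases Nat.lt_succ_iff_lt_or_eq.1 hs with h | h
          · exact Or.inr h
          · exact Or.inl (Fin.ext h)
        · rintro (h | h)
          · rw [h]; exact Nat.lt_succ_self k
          · exact Nat.lt_succ_of_lt h
      have htnot : t ∉ Finset.univ.filter (fun s : Fin n => (s:ℕ) < k) := by
        simp [htdef]
      have hsplit : ∀ ω, Sk (k+1) ω = X t ω + Sk k ω := by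
        intro ω
        simp only [hSkdef]
        rw [hfilter, Finset.sum_insert htnot]
      have hXs : ∀ s : Fin n, s < t → Measurable[mF t] (X s) := by
        intro s hst
        refine Measurable.mono (measurable_iff_comap_le.2 le_rfl) ?_ le_rfl
        exact le_iSup₂ (f := fun s (_ : s < t) =>
          MeasurableSpace.comap (X s) inferInstance) s hst
      have hSkm : Measurable[mF t] (Sk k) := by
        refine Finset.measurable_sum _ fun s hs => hXs s ?_
        simp only [Finset.mem_filter] at hs
        exact hs.2
      have hYsm : StronglyMeasurable[mF t] (fun ω => Real.exp (lam * Sk k ω)) :=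
        (Real.measurable_exp.comp (hSkm.const_mul lam)).stronglyMeasurable
      have hYZint : Integrable
          (fun ω => Real.exp (lam * Sk k ω) * Real.exp (lam * X t ω)) P := by
        have he : ∀ ω, Real.exp (lam * Sk k ω) * Real.exp (lam * X t ω)
            = Real.exp (lam * Sk (k+1) ω) := by
          intro ω; rw [← Real.exp_add, hsplit ω]; ring_nf
        exact (integrable_congr (ae_of_all _ fun ω => (he ω).symm)).1 (hintY (k+1))
      calc ∫ ω, Real.exp (lam * Sk (k+1) ω) ∂P
          = ∫ ω, Real.exp (lam * Sk k ω) * Real.exp (lam * X t ω) ∂P := by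
            congr 1; funext ω; rw [← Real.exp_add, hsplit ω]; ring_nf
        _ = ∫ ω, (P[fun ω => Real.exp (lam * Sk k ω) * Real.exp (lam * X t ω) | mF t]) ω ∂P :=
            (integral_condExp (hmle t)).symm
        _ = ∫ ω, Real.exp (lam * Sk k ω) * (P[fun ω => Real.exp (lam * X t ω) | mF t]) ω ∂P := by
            refine integral_congr_ae ?_
            have := condExp_mul_of_stronglyMeasurable_left (μ := P) hYsm
              (show Integrable ((fun ω => Real.exp (lam * Sk k ω)) *
                fun ω => Real.exp (lam * X t ω)) P from hYZint) (hintZ t)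
            filter_upwards [this] with ω hω
            exact hω
        _ ≤ ∫ ω, B * Real.exp (lam * Sk k ω) ∂P := by
            refine integral_mono_ae ?_ ((hintY k).const_mul B) ?_
            · refine integrable_condExp.bdd_mul
                ((Real.measurable_exp.comp ((hSkmeas k).const_mul lam)).aestronglyMeasurable)
                (c := Real.exp (lam * n)) (ae_of_all _ fun ω => ?_)
              rw [Real.norm_eq_abs, abs_of_pos (Real.exp_pos _)]
              exact Real.exp_le_exp.2 (mul_le_mul_of_nonneg_left (hSk_le k ω) hlam)
            · filter_upwards [hcb t] with ω hω
              have h0 : 0 ≤ Real.exp (lam * Sk k ω) := (Real.exp_pos _).le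
              calc Real.exp (lam * Sk k ω) * (P[fun ω => Real.exp (lam * X t ω) | mF t]) ω
                  ≤ Real.exp (lam * Sk k ω) * B := mul_le_mul_of_nonneg_left hω h0
                _ = B * Real.exp (lam * Sk k ω) := mul_comm _ _
        _ = B * ∫ ω, Real.exp (lam * Sk k ω) ∂P := integral_const_mul _ _
        _ ≤ B * B ^ k := mul_le_mul_of_nonneg_left (ih (le_of_lt hk1)) hB0
        _ = B ^ (k+1) := by ring
  -- conclusion
  have hSn : ∀ ω, Sk n ω = ∑ t, X t ω := by
    intro ω
    simp only [hSkdef]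
    congr 1
    refine Finset.filter_true_of_mem fun s _ => s.isLt
  have hintS : Integrable (fun ω => Real.exp (lam * ∑ t, X t ω)) P :=
    (integrable_congr (ae_of_all _ fun ω => by rw [hSn ω])).1 (hintY n)
  have hch := ProbabilityTheory.measure_ge_le_exp_mul_mgf (μ := P)
    (X := fun ω => ∑ t, X t ω) ((n:ℝ) * mu + a) hlam hintS
  have hmgf_le : ProbabilityTheory.mgf (fun ω => ∑ t, X t ω) P lam
      ≤ Real.exp ((n:ℝ) * (mu * lam + lam ^ 2 / 8)) := by
    calc ProbabilityTheory.mgf (fun ω => ∑ t, X t ω) P lam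
        = ∫ ω, Real.exp (lam * ∑ t, X t ω) ∂P := rfl
      _ = ∫ ω, Real.exp (lam * Sk n ω) ∂P := by congr 1; funext ω; rw [hSn ω]
      _ ≤ B ^ n := hkey n le_rfl
      _ ≤ (Real.exp (mu * lam + lam ^ 2 / 8)) ^ n := by
          refine pow_le_pow_left₀ hB0 ?_ n
          calc B = 1 - mu + mu * Real.exp lam := by simp only [hBdef, hcdef]; ring
            _ ≤ _ := hoeff_key mu hmu.1 hmu.2 lam hlam
      _ = Real.exp ((n:ℝ) * (mu * lam + lam ^ 2 / 8)) := by
          rw [← Real.exp_nat_mul]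
  have hne : ((n:ℝ)) ≠ 0 := Nat.cast_ne_zero.2 hn.ne'
  have hfinal : Real.exp (-lam * ((n:ℝ) * mu + a))
      * Real.exp ((n:ℝ) * (mu * lam + lam ^ 2 / 8)) = Real.exp (-2 * a ^ 2 / n) := by
    rw [← Real.exp_add]
    congr 1
    simp only [hlamdef]
    field_simp
    ring
  calc P {ω | (n : ℝ) * mu + a ≤ ∑ t, X t ω}
      = ENNReal.ofReal ((P {ω | (n : ℝ) * mu + a ≤ ∑ t, X t ω}).toReal) :=
        (ENNReal.ofReal_toReal (measure_ne_top _ _)).symm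
    _ ≤ ENNReal.ofReal (Real.exp (-2 * a ^ 2 / n)) := by
        refine ENNReal.ofReal_le_ofReal ?_
        calc (P {ω | (n : ℝ) * mu + a ≤ ∑ t, X t ω}).toReal
            ≤ Real.exp (-lam * ((n:ℝ) * mu + a))
              * ProbabilityTheory.mgf (fun ω => ∑ t, X t ω) P lam := hch
          _ ≤ Real.exp (-lam * ((n:ℝ) * mu + a))
              * Real.exp ((n:ℝ) * (mu * lam + lam ^ 2 / 8)) :=
              mul_le_mul_of_nonneg_left hmgf_le (Real.exp_pos _).le
          _ = Real.exp (-2 * a ^ 2 / n) := hfinal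
end

section
/- Let (Ω, F, P) be a probability space and let X_1, …, X_n be real-valued random variables on Ω with values in [0,1] such that for every 1 ≤ t ≤ n the conditional expectation of X_t given the σ-algebra generated by X_1, …, X_{t−1} equals μ almost surely. Let S_n = X_1 + … + X_n. Then for every a ≥ 0, P(S_n ≤ n·μ − a) ≤ exp(−2a²/n). -/
open Real

lemma hoeffding_scalar (p : ℝ) (hp0 : 0 ≤ p) (hp1 : p ≤ 1) (t : ℝ) :
    (1 - p + p * Real.exp t) * Real.exp (-(p * t)) ≤ Real.exp (t ^ 2 / 8) := by
  set D : ℝ → ℝ := fun t => 1 - p + p * Real.exp t with hDdef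
  have hDpos : ∀ s, 0 < D s := by
    intro s
    rcases eq_or_lt_of_le hp0 with h | h
    · simp [hDdef, ← h]
    · have := Real.exp_pos s
      simp only [hDdef]
      nlinarith
  set φ : ℝ → ℝ := fun s => Real.log (D s) - p * s with hφdef
  set gd : ℝ → ℝ := fun s => s / 4 - (p * Real.exp s / D s - p) with hgddef
  set g : ℝ → ℝ := fun s => s ^ 2 / 8 - φ s with hgdef
  have hD : ∀ s, HasDerivAt D (p * Real.exp s) s := fun s =>
    ((Real.hasDerivAt_exp s).const_mul p).const_add (1 - p)
  have hφ' : ∀ s, HasDerivAt φ (p * Real.exp s / D s - p) s := by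
    intro s
    have h2 : HasDerivAt (fun s : ℝ => p * s) p s := by
      simpa using (hasDerivAt_id s).const_mul p
    exact ((hD s).log (hDpos s).ne').sub h2
  have hg' : ∀ s, HasDerivAt g (gd s) s := by
    intro s
    have h1 : HasDerivAt (fun s : ℝ => s ^ 2 / 8) (s / 4) s := by
      have := (hasDerivAt_pow 2 s).div_const 8
      refine this.congr_deriv ?_
      norm_num
      ring
    exact h1.sub (hφ' s)
  have hgd' : ∀ s, HasDerivAt gd
      (1 / 4 - (p * Real.exp s * D s - p * Real.exp s * (p * Real.exp s)) / (D s) ^ 2) s := by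
    intro s
    have hnum : HasDerivAt (fun s => p * Real.exp s) (p * Real.exp s) s :=
      (Real.hasDerivAt_exp s).const_mul p
    have hq : HasDerivAt (fun s => p * Real.exp s / D s)
        ((p * Real.exp s * D s - p * Real.exp s * (p * Real.exp s)) / (D s) ^ 2) s :=
      hnum.div (hD s) (hDpos s).ne'
    have h1 : HasDerivAt (fun s : ℝ => s / 4) (1 / 4) s := (hasDerivAt_id s).div_const 4
    exact h1.sub (hq.sub_const p)
  have hgd_nonneg : ∀ s, 0 ≤ 1 / 4 - (p * Real.exp s * D s - p * Real.exp s * (p * Real.exp s)) / (D s) ^ 2 := by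
    intro s
    have hDp := hDpos s
    have hu : 0 ≤ p * Real.exp s := by positivity
    have huD : p * Real.exp s ≤ D s := by
      show p * Real.exp s ≤ 1 - p + p * Real.exp s
      linarith
    rw [sub_nonneg, div_le_iff₀ (by positivity)]
    set u := p * Real.exp s with hu_def
    set d := D s with hd_def
    clear_value u d
    nlinarith [sq_nonneg (d - 2 * u)]
  have hgd_mono : Monotone gd := by
    apply monotone_of_deriv_nonneg
    · exact fun s => (hgd' s).differentiableAt
    · intro s
      rw [(hgd' s).deriv]
      exact hgd_nonneg s
  have hgd0 : gd 0 = 0 := by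
    simp [hgddef, hDdef]
  have hg_nonneg : ∀ s, 0 ≤ g s := by
    intro s
    have hg0 : g 0 = 0 := by simp [hgdef, hφdef, hDdef]
    rcases le_total 0 s with h | h
    · have hmono : MonotoneOn g (Set.Ici (0:ℝ)) := by
        apply monotoneOn_of_deriv_nonneg (convex_Ici 0)
        · exact (fun x _ => (hg' x).differentiableAt.continuousAt.continuousWithinAt)
        · exact fun x _ => (hg' x).differentiableAt.differentiableWithinAt
        · intro x hx
          rw [(hg' x).deriv]
          rw [← hgd0]
          exact hgd_mono (le_of_lt (by simpa using hx))
      have := hmono Set.self_mem_Ici h h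
      rwa [hg0] at this
    · have hanti : AntitoneOn g (Set.Iic (0:ℝ)) := by
        apply antitoneOn_of_deriv_nonpos (convex_Iic 0)
        · exact (fun x _ => (hg' x).differentiableAt.continuousAt.continuousWithinAt)
        · exact fun x _ => (hg' x).differentiableAt.differentiableWithinAt
        · intro x hx
          rw [(hg' x).deriv]
          rw [← hgd0]
          exact hgd_mono (le_of_lt (by simpa using hx))
      have := hanti h Set.self_mem_Iic h
      rwa [hg0] at this
  have hφt : φ t ≤ t ^ 2 / 8 := by
    have := hg_nonneg t
    simp only [hgdef] at this
    linarith
  calc (1 - p + p * Real.exp t) * Real.exp (-(p * t))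
      = Real.exp (φ t) := by
        rw [hφdef]
        simp only
        rw [Real.exp_sub, Real.exp_log (hDpos t)]
        rw [Real.exp_neg]
        rfl
    _ ≤ Real.exp (t ^ 2 / 8) := Real.exp_le_exp.mpr hφt

open MeasureTheory

/-- The σ-algebra generated by `X s` for `s < t`. -/
def pastFiltration {Ω : Type*} [MeasurableSpace Ω] (n : ℕ) (X : Fin n → Ω → ℝ)
    (t : Fin n) : MeasurableSpace Ω :=
  ⨆ (s : Fin n) (_ : s < t), MeasurableSpace.comap (X s) inferInstance

lemma pastFiltration_le {Ω : Type*} [m : MeasurableSpace Ω] {n : ℕ} {X : Fin n → Ω → ℝ}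
    (hmeas : ∀ s, Measurable (X s)) (t : Fin n) : pastFiltration n X t ≤ m :=
  iSup₂_le fun s _ => measurable_iff_comap_le.mp (hmeas s)

lemma comap_le_pastFiltration {Ω : Type*} [MeasurableSpace Ω] {n : ℕ} {X : Fin n → Ω → ℝ}
    {s t : Fin n} (hst : s < t) :
    MeasurableSpace.comap (X s) inferInstance ≤ pastFiltration n X t :=
  le_iSup₂ (f := fun (s : Fin n) (_ : s < t) => MeasurableSpace.comap (X s) inferInstance) s hst

/-- Lower-tail Chernoff–Hoeffding bound for random variables with range `[0,1]`
whose conditional mean given the past is `mu`. -/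
theorem chernoff_hoeffding_lower
    {Ω : Type*} [MeasurableSpace Ω] (P : Measure Ω) [IsProbabilityMeasure P]
    (n : ℕ) (X : Fin n → Ω → ℝ) (mu : ℝ)
    (hmeas : ∀ t, Measurable (X t))
    (hrange : ∀ t ω, X t ω ∈ Set.Icc (0 : ℝ) 1)
    (hcond : ∀ t : Fin n,
      P[X t | ⨆ (s : Fin n) (_ : s < t), MeasurableSpace.comap (X s) inferInstance]
        =ᵐ[P] fun _ => mu)
    (a : ℝ) (ha : 0 ≤ a) :
    P {ω | ∑ t, X t ω ≤ (n : ℝ) * mu - a}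
      ≤ ENNReal.ofReal (Real.exp (-2 * a ^ 2 / n)) := by
  by_cases htriv : a = 0 ∨ n = 0
  · have h0 : -2 * a ^ 2 / n = 0 := by rcases htriv with h | h <;> simp [h]
    rw [h0, Real.exp_zero, ENNReal.ofReal_one]
    exact prob_le_one
  push_neg at htriv
  obtain ⟨ha0, hn0⟩ := htriv
  have hn : 0 < n := Nat.pos_of_ne_zero hn0
  have hncast : (0:ℝ) < (n:ℝ) := by exact_mod_cast hn
  have hapos : 0 < a := lt_of_le_of_ne ha (Ne.symm ha0)
  have hcond' : ∀ t, P[X t | pastFiltration n X t] =ᵐ[P] fun _ => mu := fun t => hcond t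
  have hFle : ∀ t, pastFiltration n X t ≤ ‹MeasurableSpace Ω› := pastFiltration_le hmeas
  -- integrability of bounded measurable functions
  have hboundInt : ∀ (f : Ω → ℝ) (C : ℝ), Measurable f → (∀ ω, ‖f ω‖ ≤ C) → Integrable f P :=
    fun f C hf h =>
      (integrable_const C).mono' hf.aestronglyMeasurable (Filter.Eventually.of_forall h)
  have hXint : ∀ t, Integrable (X t) P := fun t =>
    hboundInt _ 1 (hmeas t) fun ω => by
      rw [Real.norm_eq_abs, abs_le]
      exact ⟨by linarith [(hrange t ω).1], (hrange t ω).2⟩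
  -- mu lies in [0,1]
  set t0 : Fin n := ⟨0, hn⟩ with ht0
  have hmu_eq : mu = ∫ ω, X t0 ω ∂P := by
    have h1 := integral_condExp (μ := P) (hFle t0) (f := X t0)
    have h2 : ∫ ω, (P[X t0 | pastFiltration n X t0]) ω ∂P = mu := by
      rw [integral_congr_ae (hcond' t0)]
      simp
    rw [← h1, h2]
  have hmu0 : 0 ≤ mu := hmu_eq ▸ integral_nonneg fun ω => (hrange t0 ω).1
  have hmu1 : mu ≤ 1 := by
    rw [hmu_eq]
    calc ∫ ω, X t0 ω ∂P ≤ ∫ _, (1:ℝ) ∂P :=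
          integral_mono (hXint t0) (integrable_const 1) fun ω => (hrange t0 ω).2
      _ = 1 := by simp
  -- the exponential weights
  set l : ℝ := 4 * a / n with hldef
  have hl : 0 < l := by positivity
  set Y : Fin n → Ω → ℝ := fun t ω => Real.exp (l * (mu - X t ω)) with hYdef
  set Z : ℕ → Ω → ℝ :=
    fun k ω => ∏ t ∈ Finset.filter (fun t : Fin n => (t : ℕ) < k) Finset.univ, Y t ω with hZdef
  have hYmeas : ∀ t, Measurable (Y t) := fun t =>
    Real.measurable_exp.comp (((hmeas t).const_sub mu).const_mul l)
  have hYpos : ∀ t ω, 0 < Y t ω := fun t ω => Real.exp_pos _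
  have hYle : ∀ t ω, Y t ω ≤ Real.exp (l * mu) := fun t ω =>
    Real.exp_le_exp.mpr (by nlinarith [mul_nonneg hl.le (hrange t ω).1])
  have hC1 : (1:ℝ) ≤ Real.exp (l * mu) := Real.one_le_exp (by positivity)
  have hZnonneg : ∀ k ω, 0 ≤ Z k ω := fun k ω =>
    Finset.prod_nonneg fun t _ => (hYpos t ω).le
  have hZle : ∀ k ω, Z k ω ≤ Real.exp (l * mu) ^ n := by
    intro k ω
    calc Z k ω ≤ ∏ _t ∈ Finset.filter (fun t : Fin n => (t : ℕ) < k) Finset.univ,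
          Real.exp (l * mu) :=
          Finset.prod_le_prod (fun t _ => (hYpos t ω).le) (fun t _ => hYle t ω)
      _ = Real.exp (l * mu) ^ (Finset.filter (fun t : Fin n => (t : ℕ) < k) Finset.univ).card :=
          Finset.prod_const _
      _ ≤ Real.exp (l * mu) ^ n := by
          apply pow_le_pow_right₀ hC1
          exact (Finset.card_filter_le _ _).trans (by simp)
  have hZmeas : ∀ k, Measurable (Z k) := fun k =>
    Finset.measurable_prod _ fun t _ => hYmeas t
  have hZint : ∀ k, Integrable (Z k) P := fun k =>
    hboundInt _ _ (hZmeas k) fun ω => by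
      rw [Real.norm_eq_abs, abs_of_nonneg (hZnonneg k ω)]; exact hZle k ω
  have hYint : ∀ t, Integrable (Y t) P := fun t =>
    hboundInt _ _ (hYmeas t) fun ω => by
      rw [Real.norm_eq_abs, abs_of_nonneg (hYpos t ω).le]; exact hYle t ω
  have hZYint : ∀ k (t : Fin n), Integrable (fun ω => Z k ω * Y t ω) P := fun k t =>
    hboundInt _ (Real.exp (l * mu) ^ n * Real.exp (l * mu)) ((hZmeas k).mul (hYmeas t))
      fun ω => by
        rw [Real.norm_eq_abs, abs_of_nonneg (mul_nonneg (hZnonneg k ω) (hYpos t ω).le)]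
        exact mul_le_mul (hZle k ω) (hYle t ω) (hYpos t ω).le (by positivity)
  -- the key conditional bound
  have hkey : ∀ t : Fin n,
      P[Y t | pastFiltration n X t] ≤ᵐ[P] fun _ => Real.exp (l ^ 2 / 8) := by
    intro t
    set c2 : ℝ := Real.exp (l * mu) * (1 - Real.exp (-l)) with hc2
    set A : Ω → ℝ := (fun _ => Real.exp (l * mu)) - c2 • X t with hA
    have hAint : Integrable A P := (integrable_const _).sub ((hXint t).smul c2)
    have hptwise : ∀ ω, Y t ω ≤ A ω := by
      intro ω
      obtain ⟨hx0, hx1⟩ := hrange t ω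
      have hcx := convexOn_exp.2 (Set.mem_univ (0:ℝ)) (Set.mem_univ (-l))
        (by linarith : (0:ℝ) ≤ 1 - X t ω) hx0 (by ring)
      simp only [smul_eq_mul, mul_zero, Real.exp_zero, mul_one, zero_add] at hcx
      -- hcx : Real.exp (X t ω * -l) ≤ 1 - X t ω + X t ω * Real.exp (-l)
      have h1 : Y t ω = Real.exp (l * mu) * Real.exp (X t ω * (-l)) := by
        simp only [hYdef, ← Real.exp_add]
        congr 1
        ring
      have hexp := Real.exp_pos (l * mu)
      simp only [hA, Pi.sub_apply, Pi.smul_apply, smul_eq_mul, hc2]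
      rw [h1]
      nlinarith
    have hcondY : P[Y t | pastFiltration n X t] ≤ᵐ[P] P[A | pastFiltration n X t] :=
      condExp_mono (hYint t) hAint (Filter.Eventually.of_forall hptwise)
    have haffine : P[A | pastFiltration n X t] =ᵐ[P]
        fun _ => Real.exp (l * mu) - c2 * mu := by
      have hc := condExp_const (μ := P) (hFle t) (Real.exp (l * mu))
      filter_upwards [condExp_sub (μ := P) (m := pastFiltration n X t)
          (integrable_const (Real.exp (l * mu))) ((hXint t).smul c2),
        condExp_smul (μ := P) (m := pastFiltration n X t) c2 (X t),
        hcond' t] with ω h1 h2 h3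
      rw [hA]
      rw [h1]
      simp only [Pi.sub_apply, Pi.smul_apply, smul_eq_mul] at h2 ⊢
      rw [h2, h3, hc]
    filter_upwards [hcondY, haffine] with ω h1 h2
    rw [h2] at h1
    refine h1.trans ?_
    have hs := hoeffding_scalar mu hmu0 hmu1 (-l)
    have e1 : -(mu * -l) = l * mu := by ring
    have e2 : (-l) ^ 2 / 8 = l ^ 2 / 8 := by ring
    rw [e1, e2] at hs
    calc Real.exp (l * mu) - c2 * mu
        = (1 - mu + mu * Real.exp (-l)) * Real.exp (l * mu) := by rw [hc2]; ring
      _ ≤ Real.exp (l ^ 2 / 8) := hs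
  -- the induction on partial products
  have hmain : ∀ k, k ≤ n → ∫ ω, Z k ω ∂P ≤ Real.exp (k * (l ^ 2 / 8)) := by
    intro k
    induction k with
    | zero =>
      intro _
      simp only [hZdef, Nat.cast_zero, zero_mul, Real.exp_zero]
      have : Finset.filter (fun t : Fin n => (t : ℕ) < 0) Finset.univ = ∅ := by
        apply Finset.filter_false_of_mem; intro t _; omega
      simp [this]
    | succ k ih =>
      intro hk1
      have hk : k < n := hk1
      have ihk := ih hk.le
      set tk : Fin n := ⟨k, hk⟩ with htk
      have hsplit : ∀ ω, Z (k + 1) ω = Z k ω * Y tk ω := by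
        intro ω
        simp only [hZdef]
        rw [show Finset.filter (fun t : Fin n => (t : ℕ) < k + 1) Finset.univ
            = insert tk (Finset.filter (fun t : Fin n => (t : ℕ) < k) Finset.univ) from by
          ext t
          simp only [Finset.mem_insert, Finset.mem_filter, Finset.mem_univ, true_and,
            Fin.ext_iff, htk]
          omega]
        rw [Finset.prod_insert (by simp [htk])]
        ring
      have hZk_sm : StronglyMeasurable[pastFiltration n X tk] (Z k) := by
        have hm : Measurable[pastFiltration n X tk] (Z k) := by
          apply Finset.measurable_prod
          intro t ht
          have htlt : t < tk := by
            rw [Finset.mem_filter] at ht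
            rw [Fin.lt_def]
            exact ht.2
          have hXm : Measurable[pastFiltration n X tk] (X t) :=
            measurable_iff_comap_le.mpr (comap_le_pastFiltration htlt)
          exact Real.measurable_exp.comp ((hXm.const_sub mu).const_mul l)
        exact hm.stronglyMeasurable
      have hpull : P[Z k * Y tk | pastFiltration n X tk]
          =ᵐ[P] Z k * P[Y tk | pastFiltration n X tk] :=
        condExp_mul_of_stronglyMeasurable_left hZk_sm (by exact hZYint k tk) (hYint tk)
      have hint1 : Integrable (fun ω => Z k ω * (P[Y tk | pastFiltration n X tk]) ω) P :=
        integrable_condExp.bdd_mul (c := Real.exp (l * mu) ^ n) (hZmeas k).aestronglyMeasurable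
          (Filter.Eventually.of_forall fun ω => by
            rw [Real.norm_eq_abs, abs_of_nonneg (hZnonneg k ω)]; exact hZle k ω)
      have hint2 : Integrable (fun ω => Z k ω * Real.exp (l ^ 2 / 8)) P :=
        (hZint k).mul_const _
      have e1 : ∫ ω, Z (k + 1) ω ∂P = ∫ ω, (Z k * Y tk) ω ∂P :=
        integral_congr_ae (Filter.Eventually.of_forall fun ω => by
          simp only [Pi.mul_apply]; exact hsplit ω)
      have e2 : ∫ ω, (Z k * Y tk) ω ∂P
          = ∫ ω, (P[Z k * Y tk | pastFiltration n X tk]) ω ∂P :=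
        (integral_condExp (hFle tk)).symm
      have e3 : ∫ ω, (P[Z k * Y tk | pastFiltration n X tk]) ω ∂P
          = ∫ ω, Z k ω * (P[Y tk | pastFiltration n X tk]) ω ∂P :=
        integral_congr_ae (by filter_upwards [hpull] with ω h; simpa using h)
      have e4 : ∫ ω, Z k ω * (P[Y tk | pastFiltration n X tk]) ω ∂P
          ≤ ∫ ω, Z k ω * Real.exp (l ^ 2 / 8) ∂P := by
        apply integral_mono_ae hint1 hint2
        filter_upwards [hkey tk] with ω h
        exact mul_le_mul_of_nonneg_left h (hZnonneg k ω)
      have e5 : ∫ ω, Z k ω * Real.exp (l ^ 2 / 8) ∂P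
          = (∫ ω, Z k ω ∂P) * Real.exp (l ^ 2 / 8) := integral_mul_const _ _
      have e7 : Real.exp ((k : ℝ) * (l ^ 2 / 8)) * Real.exp (l ^ 2 / 8)
          = Real.exp (((k : ℕ) + 1 : ℕ) * (l ^ 2 / 8)) := by
        rw [← Real.exp_add]
        congr 1
        push_cast
        ring
      rw [e1, e2, e3]
      calc ∫ ω, Z k ω * (P[Y tk | pastFiltration n X tk]) ω ∂P
          ≤ ∫ ω, Z k ω * Real.exp (l ^ 2 / 8) ∂P := e4
        _ = (∫ ω, Z k ω ∂P) * Real.exp (l ^ 2 / 8) := e5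
        _ ≤ Real.exp ((k : ℝ) * (l ^ 2 / 8)) * Real.exp (l ^ 2 / 8) :=
            mul_le_mul_of_nonneg_right ihk (Real.exp_pos _).le
        _ = Real.exp (((k + 1 : ℕ) : ℝ) * (l ^ 2 / 8)) := e7
  -- Markov's inequality
  have hW : ∀ ω, Z n ω = Real.exp (l * ((n : ℝ) * mu - ∑ t, X t ω)) := by
    intro ω
    simp only [hZdef]
    rw [Finset.filter_true_of_mem (fun t _ => t.isLt)]
    rw [show l * ((n : ℝ) * mu - ∑ t, X t ω) = ∑ t : Fin n, l * (mu - X t ω) from by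
      rw [← Finset.mul_sum, Finset.sum_sub_distrib, Finset.sum_const, Finset.card_univ,
        Fintype.card_fin]
      push_cast
      ring]
    rw [Real.exp_sum]
  have hsub : {ω | ∑ t, X t ω ≤ (n : ℝ) * mu - a} ⊆ {ω | Real.exp (l * a) ≤ Z n ω} := by
    intro ω hω
    simp only [Set.mem_setOf_eq] at hω ⊢
    rw [hW ω]
    apply Real.exp_le_exp.mpr
    have h : a ≤ (n : ℝ) * mu - ∑ t, X t ω := by linarith
    nlinarith [hl.le]
  have hmarkov := mul_meas_ge_le_integral_of_nonneg (μ := P) (f := Z n)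
    (Filter.Eventually.of_forall (hZnonneg n)) (hZint n) (Real.exp (l * a))
  have hZn := hmain n le_rfl
  have h1 : (P {x | Real.exp (l * a) ≤ Z n x}).toReal
      ≤ Real.exp ((n : ℝ) * (l ^ 2 / 8)) / Real.exp (l * a) := by
    rw [le_div_iff₀ (Real.exp_pos _)]
    calc (P {x | Real.exp (l * a) ≤ Z n x}).toReal * Real.exp (l * a)
        = Real.exp (l * a) * (P {x | Real.exp (l * a) ≤ Z n x}).toReal := mul_comm _ _
      _ ≤ ∫ ω, Z n ω ∂P := hmarkov
      _ ≤ Real.exp ((n : ℝ) * (l ^ 2 / 8)) := hZn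
  have h2 : Real.exp ((n : ℝ) * (l ^ 2 / 8)) / Real.exp (l * a) = Real.exp (-2 * a ^ 2 / n) := by
    rw [← Real.exp_sub]
    congr 1
    rw [hldef]
    field_simp
    ring
  calc P {ω | ∑ t, X t ω ≤ (n : ℝ) * mu - a}
      ≤ P {x | Real.exp (l * a) ≤ Z n x} := measure_mono hsub
    _ = ENNReal.ofReal ((P {x | Real.exp (l * a) ≤ Z n x}).toReal) :=
        (ENNReal.ofReal_toReal (measure_ne_top P _)).symm
    _ ≤ ENNReal.ofReal (Real.exp (-2 * a ^ 2 / n)) :=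
        ENNReal.ofReal_le_ofReal (h2 ▸ h1)
end

section
/- Let d and L be integers with 1 ≤ d ≤ L, let t ≥ 1 be an integer, and for each j = 1, …, d let (X_{j,k})_{k≥1} be an i.i.d. sequence of random variables with values in [0,1] and mean θ_j (no independence across different j is assumed). Let a_1, …, a_d be strictly positive reals, let m_1, …, m_d be integers with 1 ≤ m_j ≤ t, write X̄_{j,m_j} = (1/m_j)·(X_{j,1} + … + X_{j,m_j}) and C_{t,m} = √((L+1)·ln t / m). Then P( Σ_{j=1}^d a_j·X̄_{j,m_j} ≥ Σ_{j=1}^d a_j·θ_j + Σ_{j=1}^d a_j·C_{t,m_j} ) ≤ L·t^{−2(L+1)}. -/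
open MeasureTheory ProbabilityTheory

section Aux


lemma hoeffding_g_pos {p : ℝ} (hp0 : 0 ≤ p) (hp1 : p ≤ 1) (s : ℝ) :
    0 < 1 - p + p * Real.exp s := by
  rcases eq_or_lt_of_le hp1 with h | h
  · subst h; simpa using Real.exp_pos s
  · have := mul_nonneg hp0 (Real.exp_pos s).le
    linarith

lemma hoeffding_core {p : ℝ} (hp0 : 0 ≤ p) (hp1 : p ≤ 1) (s : ℝ) :
    1 - p + p * Real.exp s ≤ Real.exp (s * p + s ^ 2 / 8) := by
  set g : ℝ → ℝ := fun s => 1 - p + p * Real.exp s with hgdef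
  have hgpos : ∀ u, 0 < g u := fun u => hoeffding_g_pos hp0 hp1 u
  set F : ℝ → ℝ := fun u => u ^ 2 / 8 + u * p - Real.log (g u) with hFdef
  set F' : ℝ → ℝ := fun u => u / 4 + p - p * Real.exp u / g u with hF'def
  have hg : ∀ u, HasDerivAt g (p * Real.exp u) u := fun u => by
    exact ((Real.hasDerivAt_exp u).const_mul p).const_add (1 - p)
  have hF : ∀ u, HasDerivAt F (F' u) u := by
    intro u
    have h1 : HasDerivAt (fun u : ℝ => u ^ 2 / 8 + u * p)
        (u / 4 + p) u := by
      have := ((hasDerivAt_pow 2 u).div_const 8).add ((hasDerivAt_id u).mul_const p)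
      refine (this : HasDerivAt (fun u : ℝ => u ^ 2 / 8 + u * p) _ u).congr_deriv ?_
      push_cast
      ring
    have h2 : HasDerivAt (fun u => Real.log (g u)) (p * Real.exp u / g u) u :=
      (hg u).log (hgpos u).ne'
    exact h1.sub h2
  have hF' : ∀ u, HasDerivAt F' (1 / 4 - p * Real.exp u * (1 - p) / (g u) ^ 2) u := by
    intro u
    have h1 : HasDerivAt (fun u : ℝ => u / 4 + p) (1 / 4) u := by
      simpa using ((hasDerivAt_id u).div_const 4).add_const p
    have h2 : HasDerivAt (fun u => p * Real.exp u / g u)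
        ((p * Real.exp u * g u - p * Real.exp u * (p * Real.exp u)) / (g u) ^ 2) u :=
      ((Real.hasDerivAt_exp u).const_mul p).div (hg u) (hgpos u).ne'
    have heq : (p * Real.exp u * g u - p * Real.exp u * (p * Real.exp u)) / (g u) ^ 2
        = p * Real.exp u * (1 - p) / (g u) ^ 2 := by
      rw [hgdef]; ring_nf
    rw [heq] at h2
    exact h1.sub h2
  have hF'nonneg : ∀ u, 0 ≤ 1 / 4 - p * Real.exp u * (1 - p) / (g u) ^ 2 := by
    intro u
    have hle : p * Real.exp u * (1 - p) / (g u) ^ 2 ≤ 1 / 4 := by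
      rw [div_le_iff₀ (pow_pos (hgpos u) 2)]
      have h := sq_nonneg (1 - p - p * Real.exp u)
      simp only [hgdef]
      nlinarith [Real.exp_pos u]
    linarith
  have hmono : Monotone F' :=
    monotone_of_hasDerivAt_nonneg hF' hF'nonneg
  have hF'0 : F' 0 = 0 := by
    simp [hF'def, hgdef]
  have hF0 : F 0 = 0 := by
    simp [hFdef, hgdef]
  have hFnonneg : 0 ≤ F s := by
    rcases le_total 0 s with hs | hs
    · have : MonotoneOn F (Set.Ici 0) := by
        refine monotoneOn_of_deriv_nonneg (convex_Ici 0)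
          (fun x _ => (hF x).differentiableAt.continuousAt.continuousWithinAt)
          (fun x _ => (hF x).differentiableAt.differentiableWithinAt) (fun x hx => ?_)
        rw [(hF x).deriv]
        rw [interior_Ici] at hx
        calc (0:ℝ) = F' 0 := hF'0.symm
        _ ≤ F' x := hmono (le_of_lt hx)
      have := this (Set.self_mem_Ici) (Set.mem_Ici.mpr hs) hs
      linarith [hF0]
    · have : AntitoneOn F (Set.Iic 0) := by
        refine antitoneOn_of_deriv_nonpos (convex_Iic 0)
          (fun x _ => (hF x).differentiableAt.continuousAt.continuousWithinAt)
          (fun x _ => (hF x).differentiableAt.differentiableWithinAt) (fun x hx => ?_)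
        rw [(hF x).deriv]
        rw [interior_Iic] at hx
        calc F' x ≤ F' 0 := hmono (le_of_lt hx)
        _ = 0 := hF'0
      have := this (Set.mem_Iic.mpr hs) (Set.self_mem_Iic) hs
      linarith [hF0]
  have hlog : Real.log (g s) ≤ s * p + s ^ 2 / 8 := by
    have h2 : (0:ℝ) ≤ s ^ 2 / 8 + s * p - Real.log (g s) := hFnonneg
    linarith
  calc g s = Real.exp (Real.log (g s)) := (Real.exp_log (hgpos s)).symm
  _ ≤ Real.exp (s * p + s ^ 2 / 8) := Real.exp_le_exp.mpr hlog

variable {Ω : Type*} [MeasurableSpace Ω] (P : Measure Ω) [IsProbabilityMeasure P]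

lemma integrable_exp_mul_of_range {Y : Ω → ℝ} (hY : Measurable Y)
    (hr : ∀ ω, Y ω ∈ Set.Icc (0:ℝ) 1) (s : ℝ) :
    Integrable (fun ω => Real.exp (s * Y ω)) P := by
  refine (integrable_const (Real.exp |s|)).mono'
    ((hY.const_mul s).exp.aestronglyMeasurable) ?_
  refine Filter.Eventually.of_forall (fun ω => ?_)
  rw [Real.norm_eq_abs, abs_of_pos (Real.exp_pos _)]
  apply Real.exp_le_exp.mpr
  calc s * Y ω ≤ |s * Y ω| := le_abs_self _
  _ = |s| * |Y ω| := abs_mul _ _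
  _ ≤ |s| * 1 := by
      refine mul_le_mul_of_nonneg_left ?_ (abs_nonneg s)
      rw [abs_of_nonneg (hr ω).1]; exact (hr ω).2
  _ = |s| := mul_one _

lemma mgf_le_of_range {Y : Ω → ℝ} (hY : Measurable Y)
    (hr : ∀ ω, Y ω ∈ Set.Icc (0:ℝ) 1) (s : ℝ) :
    mgf Y P s ≤ Real.exp (s * (∫ ω, Y ω ∂P) + s ^ 2 / 8) := by
  have hYint : Integrable Y P := by
    refine (integrable_const (1:ℝ)).mono' hY.aestronglyMeasurable ?_
    exact Filter.Eventually.of_forall fun ω => by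
      rw [Real.norm_eq_abs, abs_of_nonneg (hr ω).1]; exact (hr ω).2
  set p := ∫ ω, Y ω ∂P with hpdef
  have hp0 : 0 ≤ p := integral_nonneg fun ω => (hr ω).1
  have hp1 : p ≤ 1 := by
    calc p ≤ ∫ _ω, (1:ℝ) ∂P := integral_mono hYint (integrable_const 1) (fun ω => (hr ω).2)
    _ = 1 := by simp
  have hpt : ∀ ω, Real.exp (s * Y ω) ≤ 1 + Y ω * (Real.exp s - 1) := by
    intro ω
    have h := convexOn_exp.2 (Set.mem_univ (0:ℝ)) (Set.mem_univ s)
      (sub_nonneg.mpr (hr ω).2) (hr ω).1 (by ring)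
    simp only [smul_eq_mul, mul_zero, zero_add, Real.exp_zero, mul_one] at h
    rw [mul_comm] at h
    linarith
  have h1 : mgf Y P s ≤ ∫ ω, (1 + Y ω * (Real.exp s - 1)) ∂P := by
    refine integral_mono (integrable_exp_mul_of_range P hY hr s) ?_ hpt
    exact (integrable_const (1:ℝ)).add (hYint.mul_const _)
  have h2 : ∫ ω, (1 + Y ω * (Real.exp s - 1)) ∂P = 1 - p + p * Real.exp s := by
    rw [integral_add (integrable_const (1:ℝ)) (hYint.mul_const _), integral_mul_const,
      integral_const]
    simp only [probReal_univ, measure_univ, ENNReal.toReal_one, smul_eq_mul, one_mul, ← hpdef]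
    ring
  calc mgf Y P s ≤ 1 - p + p * Real.exp s := by rw [← h2]; exact h1
  _ ≤ Real.exp (s * p + s ^ 2 / 8) := hoeffding_core hp0 hp1 s

lemma coord_bound {Y : ℕ → Ω → ℝ} (hYmeas : ∀ k, Measurable (Y k))
    (hYindep : iIndepFun Y P)
    (hYident : ∀ k, IdentDistrib (Y k) (Y 0) P P)
    (hr : ∀ k ω, Y k ω ∈ Set.Icc (0:ℝ) 1)
    (θ : ℝ) (hθ : ∫ ω, Y 0 ω ∂P = θ)
    (m : ℕ) {ε : ℝ} (hε : 0 ≤ ε) :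
    P {ω | (m:ℝ) * θ + m * ε ≤ ∑ k ∈ Finset.range m, Y k ω}
      ≤ ENNReal.ofReal (Real.exp (-(2 * m * ε ^ 2))) := by
  set s := 4 * ε with hsdef
  have hs : 0 ≤ s := by positivity
  set S : Ω → ℝ := ∑ k ∈ Finset.range m, Y k with hSdef
  have hSapp : ∀ ω, S ω = ∑ k ∈ Finset.range m, Y k ω := fun ω => by
    simp [hSdef, Finset.sum_apply]
  have hint : ∀ i ∈ Finset.range m, Integrable (fun ω => Real.exp (s * Y i ω)) P :=
    fun i _ => integrable_exp_mul_of_range P (hYmeas i) (hr i) s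
  have hintS : Integrable (fun ω => Real.exp (s * S ω)) P :=
    hYindep.integrable_exp_mul_sum hYmeas hint
  have hch := measure_ge_le_exp_mul_mgf (μ := P) (X := S) (t := s)
    ((m:ℝ) * θ + m * ε) hs hintS
  have hu : Measurable (fun x : ℝ => Real.exp (s * x)) :=
    (measurable_const.mul measurable_id).exp
  have hmgfk : ∀ k, mgf (Y k) P s = mgf (Y 0) P s := by
    intro k
    have hk := ((hYident k).comp hu).integral_eq
    simpa [mgf, Function.comp] using hk
  have hmgfS : mgf S P s = mgf (Y 0) P s ^ m := by
    rw [hSdef, hYindep.mgf_sum hYmeas]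
    rw [Finset.prod_congr rfl (fun k _ => hmgfk k), Finset.prod_const, Finset.card_range]
  have hmgf0 : mgf (Y 0) P s ≤ Real.exp (s * θ + s ^ 2 / 8) := by
    have := mgf_le_of_range P (hYmeas 0) (hr 0) s
    rwa [hθ] at this
  have hbd : Real.exp (-s * ((m:ℝ) * θ + m * ε)) * mgf S P s
      ≤ Real.exp (-(2 * m * ε ^ 2)) := by
    rw [hmgfS]
    calc Real.exp (-s * ((m:ℝ) * θ + m * ε)) * mgf (Y 0) P s ^ m
        ≤ Real.exp (-s * ((m:ℝ) * θ + m * ε)) * Real.exp (s * θ + s ^ 2 / 8) ^ m := by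
          refine mul_le_mul_of_nonneg_left ?_ (Real.exp_pos _).le
          exact pow_le_pow_left₀ mgf_nonneg hmgf0 m
    _ = Real.exp (-(2 * m * ε ^ 2)) := by
          rw [← Real.exp_nat_mul, ← Real.exp_add]
          congr 1
          rw [hsdef]; ring
  have htoReal : (P {ω | (m:ℝ) * θ + m * ε ≤ S ω}).toReal ≤ Real.exp (-(2 * m * ε ^ 2)) :=
    hch.trans hbd
  have hset : {ω | (m:ℝ) * θ + m * ε ≤ ∑ k ∈ Finset.range m, Y k ω}
      = {ω | (m:ℝ) * θ + m * ε ≤ S ω} := by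
    ext ω; simp [hSapp]
  rw [hset]
  exact (ENNReal.le_ofReal_iff_toReal_le (measure_ne_top P _) (Real.exp_pos _).le).mpr htoReal

end Aux



/-- Upper-deviation bound for a positively-weighted sum of sample means of
`d ≤ L` i.i.d. `[0,1]`-valued sequences (not necessarily independent across
coordinates), with LLR confidence radii `C_{t,m} = √((L+1)·ln t / m)`. -/
theorem weighted_sample_means_upper_deviation
    {Ω : Type*} [MeasurableSpace Ω] (P : Measure Ω) [IsProbabilityMeasure P]
    (d L t : ℕ) (hd : 1 ≤ d) (hdL : d ≤ L) (ht : 1 ≤ t)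
    (X : Fin d → ℕ → Ω → ℝ) (θ : Fin d → ℝ)
    (hmeas : ∀ j k, Measurable (X j k))
    (hindep : ∀ j, iIndepFun (X j) P)
    (hident : ∀ j k, IdentDistrib (X j k) (X j 0) P P)
    (hrange : ∀ j k ω, X j k ω ∈ Set.Icc (0 : ℝ) 1)
    (hmean : ∀ j, ∫ ω, X j 0 ω ∂P = θ j)
    (a : Fin d → ℝ) (ha : ∀ j, 0 < a j)
    (m : Fin d → ℕ) (hm1 : ∀ j, 1 ≤ m j) (hmt : ∀ j, m j ≤ t) :
    P {ω | ∑ j, a j * θ j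
          + ∑ j, a j * Real.sqrt (((L : ℝ) + 1) * Real.log t / (m j))
        ≤ ∑ j, a j * ((1 / (m j : ℝ)) * ∑ k ∈ Finset.range (m j), X j k ω)}
      ≤ ENNReal.ofReal ((L : ℝ) * ((t : ℝ) ^ (2 * (L + 1)))⁻¹) := by
  haveI : Nonempty (Fin d) := ⟨⟨0, hd⟩⟩
  set ε : Fin d → ℝ := fun j => Real.sqrt (((L : ℝ) + 1) * Real.log t / (m j)) with hεdef
  have hε0 : ∀ j, 0 ≤ ε j := fun j => Real.sqrt_nonneg _
  have htR : (1:ℝ) ≤ (t:ℝ) := by exact_mod_cast ht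
  have htpos : (0:ℝ) < (t:ℝ) := by linarith
  have hlogt : 0 ≤ Real.log t := Real.log_nonneg htR
  have hmpos : ∀ j, (0:ℝ) < (m j : ℝ) := fun j => by exact_mod_cast hm1 j
  have hεsq : ∀ j, (ε j) ^ 2 = ((L:ℝ)+1) * Real.log t / (m j) := fun j =>
    Real.sq_sqrt (by positivity)
  set E : Fin d → Set Ω := fun j =>
    {ω | (m j : ℝ) * θ j + (m j : ℝ) * ε j ≤ ∑ k ∈ Finset.range (m j), X j k ω} with hEdef
  have hsub : {ω | ∑ j, a j * θ j + ∑ j, a j * ε j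
        ≤ ∑ j, a j * ((1 / (m j : ℝ)) * ∑ k ∈ Finset.range (m j), X j k ω)}
      ⊆ ⋃ j, E j := by
    intro ω hω
    simp only [Set.mem_setOf_eq] at hω
    by_contra hc
    simp only [Set.mem_iUnion, hEdef, Set.mem_setOf_eq, not_exists, not_le] at hc
    have hlt : ∀ j, (1 / (m j : ℝ)) * ∑ k ∈ Finset.range (m j), X j k ω < θ j + ε j := by
      intro j
      have h := hc j
      rw [one_div, inv_mul_lt_iff₀ (hmpos j)]
      nlinarith [h]
    have hsum : ∑ j, a j * ((1 / (m j : ℝ)) * ∑ k ∈ Finset.range (m j), X j k ω)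
        < ∑ j, a j * (θ j + ε j) := by
      refine Finset.sum_lt_sum_of_nonempty Finset.univ_nonempty (fun j _ => ?_)
      exact mul_lt_mul_of_pos_left (hlt j) (ha j)
    have heq : ∑ j, a j * (θ j + ε j) = ∑ j, a j * θ j + ∑ j, a j * ε j := by
      rw [← Finset.sum_add_distrib]
      exact Finset.sum_congr rfl fun j _ => by ring
    rw [heq] at hsum
    linarith
  have hc0 : (0:ℝ) < ((t : ℝ) ^ (2 * (L + 1)))⁻¹ := by positivity
  have hEj : ∀ j, P (E j) ≤ ENNReal.ofReal (((t : ℝ) ^ (2 * (L + 1)))⁻¹) := by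
    intro j
    have hcb := coord_bound P (hmeas j) (hindep j) (hident j) (hrange j)
      (θ j) (hmean j) (m j) (hε0 j)
    refine le_trans hcb (le_of_eq ?_)
    congr 1
    have hm0 : (m j : ℝ) ≠ 0 := (hmpos j).ne'
    rw [hεsq j]
    have he : 2 * (m j : ℝ) * (((L:ℝ)+1) * Real.log t / (m j))
        = ((2 * (L + 1) : ℕ) : ℝ) * Real.log t := by
      push_cast
      field_simp
    rw [he, Real.exp_neg, Real.exp_nat_mul, Real.exp_log htpos]
  calc P {ω | ∑ j, a j * θ j + ∑ j, a j * ε j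
        ≤ ∑ j, a j * ((1 / (m j : ℝ)) * ∑ k ∈ Finset.range (m j), X j k ω)}
      ≤ P (⋃ j, E j) := measure_mono hsub
  _ ≤ ∑ j, P (E j) := (measure_iUnion_le _).trans_eq (tsum_fintype _)
  _ ≤ ∑ _j : Fin d, ENNReal.ofReal (((t : ℝ) ^ (2 * (L + 1)))⁻¹) :=
      Finset.sum_le_sum (fun j _ => hEj j)
  _ = (d : ENNReal) * ENNReal.ofReal (((t : ℝ) ^ (2 * (L + 1)))⁻¹) := by
      rw [Finset.sum_const, Finset.card_univ, Fintype.card_fin, nsmul_eq_mul]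
  _ ≤ (L : ENNReal) * ENNReal.ofReal (((t : ℝ) ^ (2 * (L + 1)))⁻¹) := by
      exact mul_le_mul_left (by exact_mod_cast hdL) _
  _ = ENNReal.ofReal ((L : ℝ) * ((t : ℝ) ^ (2 * (L + 1)))⁻¹) := by
      rw [ENNReal.ofReal_mul (by positivity), ENNReal.ofReal_natCast]
end
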